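/- Let q be a prime and let H be a finite group whose cardinality is a power of q, and suppose the maximal order of an element of H is q^t with t ≥ 1. Let G = (ℤ/qℤ → H) ⋊_φ ℤ/qℤ be the semidirect product of the group of functions from ℤ/qℤ to H (with pointwise multiplication) by ℤ/qℤ, where a ∈ ℤ/qℤ acts by the automorphism (φ(a)f)(i) = f(i − a) (this is the regular wreath product H ≀ᵣ ℤ/qℤ). Then the maximal order of an element of G is q^{t+1}. -/

import Mathlib

/-- The action of `ℤ/qℤ` on the direct product `ℤ/qℤ → H` by translating indices. -/
def shiftAut (q : ℕ) (H : Type*) [Group H] :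
    Multiplicative (ZMod q) →* MulAut (ZMod q → H) where
  toFun a :=
    { toFun := fun f i => f (i - a.toAdd)
      invFun := fun f i => f (i + a.toAdd)
      left_inv := fun f => funext fun i => by simp
      right_inv := fun f => funext fun i => by simp
      map_mul' := fun f g => rfl }
  map_one' := by
    ext f i
    simp
  map_mul' := fun a b => by
    ext f i
    show f (i - (a * b).toAdd) = f (i - a.toAdd - b.toAdd)
    rw [toAdd_mul, sub_sub]

lemma shiftAut_apply (q : ℕ) (H : Type*) [Group H] (a : Multiplicative (ZMod q))
    (f : ZMod q → H) (i : ZMod q) : shiftAut q H a f i = f (i - a.toAdd) := rfl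

/-- in the regular wreath product `H ≀ᵣ ℤ/qℤ`, the maximal order of an
element is `q^(t+1)`, where `q^t` is the maximal order of an element of `H`. -/
theorem stmt11 (q : ℕ) (hq : q.Prime) (H : Type) [Group H] [Finite H]
    (hcard : ∃ m : ℕ, Nat.card H = q ^ m) (t : ℕ) (ht : 1 ≤ t)
    (hmax : ∃ h : H, orderOf h = q ^ t) (hbound : ∀ h : H, orderOf h ≤ q ^ t) :
    (∃ g : (ZMod q → H) ⋊[shiftAut q H] Multiplicative (ZMod q),
        orderOf g = q ^ (t + 1)) ∧
      ∀ g : (ZMod q → H) ⋊[shiftAut q H] Multiplicative (ZMod q),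
        orderOf g ≤ q ^ (t + 1) := by
  have hq1 : 1 < q := hq.one_lt
  haveI : NeZero q := ⟨hq.ne_zero⟩
  -- every element of H has order dividing q^t
  have hdvd : ∀ h : H, orderOf h ∣ q ^ t := by
    intro h
    obtain ⟨m, hm⟩ := hcard
    have h1 : orderOf h ∣ q ^ m := hm ▸ orderOf_dvd_natCard h
    obtain ⟨s, _, hse⟩ := (Nat.dvd_prime_pow hq).mp h1
    have hb := hbound h
    rw [hse] at hb
    exact hse ▸ pow_dvd_pow q ((Nat.pow_le_pow_iff_right hq1).mp hb)
  -- every element of Multiplicative (ZMod q) satisfies x^q = 1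
  have hzq : ∀ x : Multiplicative (ZMod q), x ^ q = 1 := by
    intro x
    have : (q : ℕ) • x.toAdd = 0 := by
      rw [nsmul_eq_mul, ZMod.natCast_self, zero_mul]
    have h2 := congrArg Multiplicative.ofAdd this
    rw [ofAdd_nsmul, ofAdd_toAdd, ofAdd_zero] at h2
    exact h2
  -- any element with right component 1^... : g^(q^(t+1)) = 1
  have hkill : ∀ g : (ZMod q → H) ⋊[shiftAut q H] Multiplicative (ZMod q),
      g ^ (q ^ (t + 1)) = 1 := by
    intro g
    have hr : (g ^ q).right = 1 := by
      have : (g ^ q).right = g.right ^ q := by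
        exact map_pow (SemidirectProduct.rightHom) g q
      rw [this, hzq]
    have hgq : g ^ q = SemidirectProduct.inl ((g ^ q).left) := by
      ext
      · simp
      · simp [hr]
    calc g ^ (q ^ (t + 1)) = (g ^ q) ^ (q ^ t) := by
          rw [← pow_mul, ← pow_succ']
      _ = SemidirectProduct.inl (((g ^ q).left) ^ (q ^ t)) := by
          conv_lhs => rw [hgq]
          rw [← map_pow]
      _ = 1 := by
          rw [show ((g ^ q).left) ^ (q ^ t) = 1 from ?_, map_one]
          funext i
          rw [Pi.pow_apply, Pi.one_apply]
          exact orderOf_dvd_iff_pow_eq_one.mp (hdvd _)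
  constructor
  · obtain ⟨h, hh⟩ := hmax
    set f : ZMod q → H := fun i => if i = 0 then h else 1 with hf
    set g : (ZMod q → H) ⋊[shiftAut q H] Multiplicative (ZMod q) :=
      ⟨f, Multiplicative.ofAdd (1 : ZMod q)⟩ with hg
    have key : ∀ n, n ≤ q → g ^ n =
        ⟨fun i => if i.val < n then h else 1, Multiplicative.ofAdd (n : ZMod q)⟩ := by
      intro n
      induction n with
      | zero =>
        intro _
        rw [pow_zero]
        ext i
        · simp
        · simp
      | succ n ih =>
        intro hn
        have hnq : n < q := hn
        rw [pow_succ, ih (le_of_lt hnq)]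
        ext i
        · show (if i.val < n then h else 1) * shiftAut q H _ f i =
            if i.val < n + 1 then h else 1
          rw [shiftAut_apply]
          simp only [toAdd_ofAdd, hf]
          have hval : ((n : ZMod q)).val = n := ZMod.val_cast_of_lt hnq
          have heq : (i - (n : ZMod q) = 0) ↔ (i.val = n) := by
            rw [sub_eq_zero]
            constructor
            · intro hh2; rw [hh2, hval]
            · intro hh2
              have : ((i.val : ℕ) : ZMod q) = ((n : ℕ) : ZMod q) := by rw [hh2]
              rwa [ZMod.natCast_val, ZMod.cast_id] at this
          rcases lt_trichotomy i.val n with hlt | heqv | hgt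
          · rw [if_pos hlt, if_neg (by rw [heq]; omega), if_pos (by omega), mul_one]
          · rw [if_neg (by omega), if_pos (heq.mpr heqv), if_pos (by omega), one_mul]
          · rw [if_neg (by omega), if_neg (by rw [heq]; omega), if_neg (by omega), mul_one]
        · show Multiplicative.ofAdd (n : ZMod q) * Multiplicative.ofAdd (1 : ZMod q) =
            Multiplicative.ofAdd ((n + 1 : ℕ) : ZMod q)
          rw [← ofAdd_add]
          push_cast
          ring_nf
    have hgq : g ^ q = SemidirectProduct.inl (fun _ => h) := by
      rw [key q le_rfl]
      ext i
      · show (if i.val < q then h else 1) = h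
        rw [if_pos (ZMod.val_lt i)]
      · show Multiplicative.ofAdd ((q : ℕ) : ZMod q) = 1
        rw [ZMod.natCast_self]
        rfl
    have hogq : orderOf (g ^ q) = q ^ t := by
      rw [hgq, orderOf_injective SemidirectProduct.inl SemidirectProduct.inl_injective]
      rw [← hh]
      apply orderOf_eq_orderOf_iff.mpr
      intro n
      constructor
      · intro hn
        have := congrFun hn (0 : ZMod q)
        simpa using this
      · intro hn
        funext i
        simpa using hn
    refine ⟨g, ?_⟩
    have hd1 : orderOf g ∣ q ^ (t + 1) := orderOf_dvd_of_pow_eq_one (hkill g)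
    have hnd : ¬ orderOf g ∣ q ^ t := by
      intro hd
      have hpow : g ^ (q ^ t) = 1 := orderOf_dvd_iff_pow_eq_one.mp hd
      have : (g ^ q) ^ (q ^ (t - 1)) = 1 := by
        rw [← pow_mul, ← pow_succ']
        rw [Nat.sub_add_cancel ht] at *
        exact hpow
      have hdd : q ^ t ∣ q ^ (t - 1) := hogq ▸ orderOf_dvd_of_pow_eq_one this
      have := Nat.le_of_dvd (pow_pos hq.pos _) hdd
      have h2 := Nat.pow_lt_pow_right hq1 (show t - 1 < t by omega)
      omega
    obtain ⟨s, hs, hse⟩ := (Nat.dvd_prime_pow hq).mp hd1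
    rw [hse]
    rw [hse] at hnd
    have : ¬ s ≤ t := fun hst => hnd (pow_dvd_pow q hst)
    congr 1
    omega
  · intro g
    exact Nat.le_of_dvd (pow_pos hq.pos _)
      (orderOf_dvd_of_pow_eq_one (hkill g))
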